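/- arXiv:2507.17714 — 2 statements merged into one kernel-verified Lean document; each statement's English description precedes it below -/
import Mathlib

section
/- Assume D is lenticular (γ₁ convex and γ₂ concave on I) and ζ < (√721 − 25)/48. Then, setting D^r = π^r(R_φ), D^r is an open subset of W ≅ ℝ² and there exists a locally Lipschitz function u^r : D^r → ℝ such that R_φ coincides with the right intrinsic graph S^r_{u^r} = {(u^r(y,t), y, t − 2y·u^r(y,t)) : (y,t) ∈ D^r}. In particular, the left intrinsic graph S_u = R_φ is also a right intrinsic graph. -/
open Set

noncomputable section

/-- `Q_φ(s,λ) = λ - s + 2(γ₂(λ) - γ₁(s))(φ₂(λ) + φ₁(s))` from the paper. -/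
def Qphi (γ₁ γ₂ φ₁ φ₂ : ℝ → ℝ) (s l : ℝ) : ℝ :=
  l - s + 2 * (γ₂ l - γ₁ s) * (φ₂ l + φ₁ s)

/-- The boundary curve `p(s) = (φ(s), γ(s), s + 2γ(s)φ(s))` in `ℝ³ ≅ ℍ`. -/
def heisP (γ φ : ℝ → ℝ) (s : ℝ) : ℝ × ℝ × ℝ :=
  (φ s, γ s, s + 2 * γ s * φ s)

/-- The ruled parametrization `ρ(h,s) = (1-h)·p₁(s) + h·p₂(λ(s))`. -/
def heisRho (γ₁ γ₂ φ₁ φ₂ lam : ℝ → ℝ) (w : ℝ × ℝ) : ℝ × ℝ × ℝ :=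
  (1 - w.1) • heisP γ₁ φ₁ w.2 + w.1 • heisP γ₂ φ₂ (lam w.2)

/-- The lenticular domain `D = {(y,t) : t ∈ (0,t̄), γ₁(t) < y < γ₂(t)}`. -/
def lensD (γ₁ γ₂ : ℝ → ℝ) (tb : ℝ) : Set (ℝ × ℝ) :=
  {w | w.2 ∈ Set.Ioo 0 tb ∧ γ₁ w.2 < w.1 ∧ w.1 < γ₂ w.2}

/-- Projection onto `W = {x = 0}` along the integral curves of the right-invariant
field `X^r = ∂_x - 2y∂_t`: `π^r(x,y,t) = (y, t + 2xy)`. -/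
def piR (p : ℝ × ℝ × ℝ) : ℝ × ℝ := (p.2.1, p.2.2 + 2 * p.1 * p.2.1)

private lemma habs_mul {x y c d : ℝ} (hx : |x| ≤ c) (hy : |y| ≤ d) : |x*y| ≤ c*d := by
  rw [abs_mul]
  exact mul_le_mul hx hy (abs_nonneg _) (le_trans (abs_nonneg _) hx)

private lemma habs_sub (x y : ℝ) : |x - y| ≤ |x| + |y| := by
  calc |x - y| = |x + -y| := by ring_nf
  _ ≤ |x| + |-y| := abs_add_le _ _
  _ = |x| + |y| := by rw [abs_neg]

/-- Lipschitz estimate for λ from the implicit equation. -/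
private lemma lam_lip_core (ζ Mγ Lγ Mφ Lφ s s' l l' a a' b b' f f' g g' : ℝ)
    (hζ : ζ ≤ 1/24)
    (p1 : 4*Lγ*Mφ ≤ ζ) (p2 : 4*Mγ*Lφ ≤ ζ)
    (hbda : |a| ≤ Mγ) (hbdb : |b| ≤ Mγ)
    (hbdf' : |f'| ≤ Mφ) (hbdg' : |g'| ≤ Mφ)
    (la : |a' - a| ≤ Lγ*|s' - s|) (lb : |b' - b| ≤ Lγ*|l' - l|)
    (lf : |f' - f| ≤ Lφ*|s' - s|) (lg : |g' - g| ≤ Lφ*|l' - l|)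
    (hl : l = s - 2*(b - a)*(g + f)) (hl' : l' = s' - 2*(b' - a')*(g' + f')) :
    |l' - l| ≤ (13/11)*|s' - s| := by
  set ds := |s' - s| with hds
  set dl := |l' - l| with hdl
  have hds0 : 0 ≤ ds := abs_nonneg _
  have hdl0 : 0 ≤ dl := abs_nonneg _
  have hdw : |(b' - a') - (b - a)| ≤ Lγ*dl + Lγ*ds := by
    have e : (b' - a') - (b - a) = (b' - b) - (a' - a) := by ring
    rw [e]
    calc |(b' - b) - (a' - a)| ≤ |b' - b| + |a' - a| := habs_sub _ _
    _ ≤ Lγ*dl + Lγ*ds := add_le_add lb la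
  have hgf : |(g' + f') - (g + f)| ≤ Lφ*dl + Lφ*ds := by
    have e : (g' + f') - (g + f) = (g' - g) + (f' - f) := by ring
    rw [e]
    exact (abs_add_le _ _).trans (add_le_add lg lf)
  have hv' : |g' + f'| ≤ 2*Mφ := (abs_add_le _ _).trans (by linarith)
  have hw : |b - a| ≤ 2*Mγ := (habs_sub _ _).trans (by linarith)
  have key : |l' - l - (s' - s)| ≤ (Lγ*dl + Lγ*ds)*(2*Mφ)*2 + (2*Mγ)*(Lφ*dl + Lφ*ds)*2 := by
    have e : l' - l - (s' - s) =
        (-2) * (((b' - a') - (b - a))*(g' + f') + (b - a)*((g' + f') - (g + f))) := by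
      rw [hl, hl']; ring
    rw [e, abs_mul]
    have h1 : |((b' - a') - (b - a))*(g' + f')| ≤ (Lγ*dl + Lγ*ds)*(2*Mφ) := habs_mul hdw hv'
    have h2 : |(b - a)*((g' + f') - (g + f))| ≤ (2*Mγ)*(Lφ*dl + Lφ*ds) := habs_mul hw hgf
    have h3 : |(-2 : ℝ)| = 2 := by norm_num
    rw [h3]
    nlinarith [abs_add_le (((b' - a') - (b - a))*(g' + f')) ((b - a)*((g' + f') - (g + f)))]
  have key2 : |l' - l - (s' - s)| ≤ (1/12)*(dl + ds) := by
    have e1 : (Lγ*dl + Lγ*ds)*(2*Mφ)*2 + (2*Mγ)*(Lφ*dl + Lφ*ds)*2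
        = (4*Lγ*Mφ)*(dl + ds) + (4*Mγ*Lφ)*(dl + ds) := by ring
    rw [e1] at key
    nlinarith [mul_le_mul_of_nonneg_right p1 (by linarith : (0:ℝ) ≤ dl + ds),
      mul_le_mul_of_nonneg_right p2 (by linarith : (0:ℝ) ≤ dl + ds)]
  have tri : dl ≤ ds + |l' - l - (s' - s)| := by
    have e2 : l' - l = (s' - s) + (l' - l - (s' - s)) := by ring
    calc dl = |(s' - s) + (l' - l - (s' - s))| := by rw [hdl, ← e2]
    _ ≤ |s' - s| + |l' - l - (s' - s)| := abs_add_le _ _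
  linarith

private lemma habs_mul' {x y c d : ℝ} (hx : |x| ≤ c) (hy : |y| ≤ d) : |x*y| ≤ c*d := by
  rw [abs_mul]
  exact mul_le_mul hx hy (abs_nonneg _) (le_trans (abs_nonneg _) hx)

private lemma habs_sub' (x y : ℝ) : |x - y| ≤ |x| + |y| := by
  calc |x - y| = |x + -y| := by ring_nf
  _ ≤ |x| + |-y| := abs_add_le _ _
  _ = |x| + |y| := by rw [abs_neg]

private lemma seg_bounds {a b h y : ℝ} (hh0 : 0 ≤ h) (hh1 : h ≤ 1) (hab : a ≤ b)
    (hy : y = a + h*(b - a)) : a ≤ y ∧ y ≤ b := by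
  constructor
  · nlinarith
  · nlinarith

set_option maxHeartbeats 1000000 in
/-- The key estimate: the τ-coordinate moves essentially like s. -/
private lemma key_est (ζ Mγ Lγ Mφ Lφ s s' a a' b b' f f' g g' h h' y y' τ τ' ds dy : ℝ)
    (hζ : ζ ≤ 1/24) (hζ0 : 0 ≤ ζ) (hMφ0 : 0 ≤ Mφ)
    (p1 : 4*Lγ*Mφ ≤ ζ) (p2 : 4*Mγ*Lφ ≤ ζ)
    (hds0 : 0 ≤ ds) (hdy0 : 0 ≤ dy)
    (hss : |s' - s| ≤ ds) (hdy : |y' - y| ≤ dy)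
    (hbda : |a| ≤ Mγ) (hbda' : |a'| ≤ Mγ) (hbdb : |b| ≤ Mγ) (hbdb' : |b'| ≤ Mγ)
    (hbdf : |f| ≤ Mφ) (hbdf' : |f'| ≤ Mφ) (hbdg : |g| ≤ Mφ) (hbdg' : |g'| ≤ Mφ)
    (la : |a' - a| ≤ Lγ*ds) (lb : |b' - b| ≤ (13/11)*Lγ*ds)
    (lf : |f' - f| ≤ Lφ*ds) (lg : |g' - g| ≤ (13/11)*Lφ*ds)
    (hh0 : 0 ≤ h) (hh1 : h ≤ 1) (hh0' : 0 ≤ h') (hh1' : h' ≤ 1)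
    (ha0 : a ≤ 0) (hb0 : 0 ≤ b) (ha0' : a' ≤ 0) (hb0' : 0 ≤ b')
    (hy : y = a + h*(b - a)) (hy' : y' = a' + h'*(b' - a'))
    (hτ : τ = s + 4*a*f + 2*(g - f)*h*(a + y))
    (hτ' : τ' = s' + 4*a'*f' + 2*(g' - f')*h'*(a' + y')) :
    |τ' - τ - (s' - s)| ≤ (1/2)*ds + 12*Mφ*dy := by
  have hMγ0 : 0 ≤ Mγ := le_trans (abs_nonneg _) hbda
  have hLγds : 0 ≤ Lγ*ds := le_trans (abs_nonneg _) la
  -- y between a and b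
  have hseg := seg_bounds hh0 hh1 (by linarith : a ≤ b) hy
  have hseg' := seg_bounds hh0' hh1' (by linarith : a' ≤ b') hy'
  obtain ⟨hya, hyb⟩ := hseg
  obtain ⟨hya', hyb'⟩ := hseg'
  have hyM : |y| ≤ Mγ := by
    rw [abs_le]; rw [abs_le] at hbda hbdb; constructor <;> linarith [hbda.1, hbdb.2]
  have hyM' : |y'| ≤ Mγ := by
    rw [abs_le]; rw [abs_le] at hbda' hbdb'; constructor <;> linarith [hbda'.1, hbdb'.2]
  -- B1 : bound on a'f' - af
  have B1 : |a'*f' - a*f| ≤ Lγ*ds*Mφ + Mγ*(Lφ*ds) := by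
    have e : a'*f' - a*f = (a' - a)*f' + a*(f' - f) := by ring
    rw [e]
    exact (abs_add_le _ _).trans (add_le_add (habs_mul' la hbdf') (habs_mul' hbda lf))
  -- dx bounds
  have hdx : |g - f| ≤ 2*Mφ := (habs_sub' _ _).trans (by linarith)
  have hddx : |(g' - f') - (g - f)| ≤ (24/11)*Lφ*ds := by
    have e : (g' - f') - (g - f) = (g' - g) - (f' - f) := by ring
    rw [e]
    exact (habs_sub' _ _).trans (by linarith)
  have hv' : |a' + y'| ≤ 2*Mγ := (abs_add_le _ _).trans (by linarith)
  have hh'v' : |h'*(a' + y')| ≤ 2*Mγ := by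
    have := habs_mul' (x := h') (c := 1) (by rw [abs_of_nonneg hh0']; exact hh1') hv'
    linarith
  -- Δw bound
  have hDw : |(b' - a') - (b - a)| ≤ (24/11)*Lγ*ds := by
    have e : (b' - a') - (b - a) = (b' - b) - (a' - a) := by ring
    rw [e]
    exact (habs_sub' _ _).trans (by linarith)
  -- (h'-h)(b-a) bound
  have hhw : |(h' - h)*(b - a)| ≤ dy + Lγ*ds + (24/11)*Lγ*ds := by
    have e : (h' - h)*(b - a) = ((y' - y) - (a' - a)) - h'*((b' - a') - (b - a)) := by
      rw [hy, hy']; ring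
    rw [e]
    have t1 : |(y' - y) - (a' - a)| ≤ dy + Lγ*ds := (habs_sub' _ _).trans (add_le_add hdy la)
    have t2 : |h'*((b' - a') - (b - a))| ≤ (24/11)*Lγ*ds := by
      have := habs_mul' (x := h') (c := 1) (by rw [abs_of_nonneg hh0']; exact hh1') hDw
      linarith
    exact (habs_sub' _ _).trans (by linarith)
  -- |a+y| ≤ 2(b-a)
  have hay : |a + y| ≤ 2*(b - a) := by
    rw [abs_le]; constructor <;> linarith
  have hD : |(h' - h)*(a + y)| ≤ 2*(dy + (35/11)*Lγ*ds) := by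
    have e1 : |(h' - h)*(a + y)| ≤ |h' - h| * (2*(b - a)) := by
      rw [abs_mul]
      exact mul_le_mul_of_nonneg_left hay (abs_nonneg _)
    have e2 : |h' - h| * (2*(b - a)) = 2*|(h' - h)*(b - a)| := by
      rw [abs_mul, abs_of_nonneg (by linarith : (0:ℝ) ≤ b - a)]; ring
    rw [e2] at e1
    calc |(h' - h)*(a + y)| ≤ 2*|(h' - h)*(b - a)| := e1
    _ ≤ 2*(dy + (35/11)*Lγ*ds) := by linarith
  -- full second factor difference
  have hD2 : |h'*(a' + y') - h*(a + y)| ≤ 3*dy + (81/11)*Lγ*ds := by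
    have e : h'*(a' + y') - h*(a + y) = h'*((a' - a) + (y' - y)) + (h' - h)*(a + y) := by ring
    rw [e]
    have t1 : |h'*((a' - a) + (y' - y))| ≤ Lγ*ds + dy := by
      have t0 : |(a' - a) + (y' - y)| ≤ Lγ*ds + dy := (abs_add_le _ _).trans (add_le_add la hdy)
      have := habs_mul' (x := h') (c := 1) (by rw [abs_of_nonneg hh0']; exact hh1') t0
      linarith
    exact (abs_add_le _ _).trans (by linarith)
  -- E difference
  have hE : |(g' - f')*h'*(a' + y') - (g - f)*h*(a + y)| ≤ (105/22)*ζ*ds + 6*Mφ*dy := by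
    have e : (g' - f')*h'*(a' + y') - (g - f)*h*(a + y)
        = ((g' - f') - (g - f))*(h'*(a' + y')) + (g - f)*(h'*(a' + y') - h*(a + y)) := by ring
    rw [e]
    have t1 : |((g' - f') - (g - f))*(h'*(a' + y'))| ≤ ((24/11)*Lφ*ds)*(2*Mγ) :=
      habs_mul' hddx hh'v'
    have t2 : |(g - f)*(h'*(a' + y') - h*(a + y))| ≤ (2*Mφ)*(3*dy + (81/11)*Lγ*ds) :=
      habs_mul' hdx hD2
    have c1 : ((24/11)*Lφ*ds)*(2*Mγ) ≤ (12/11)*ζ*ds := by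
      have hp := mul_le_mul_of_nonneg_right p2 hds0
      calc ((24/11)*Lφ*ds)*(2*Mγ) = (12/11)*(4*Mγ*Lφ*ds) := by ring
      _ ≤ (12/11)*(ζ*ds) := by linarith
      _ = (12/11)*ζ*ds := by ring
    have c2 : (2*Mφ)*(3*dy + (81/11)*Lγ*ds) ≤ 6*Mφ*dy + (81/22)*ζ*ds := by
      have hp := mul_le_mul_of_nonneg_right p1 hds0
      have hq : (2*Mφ)*((81/11)*Lγ*ds) ≤ (81/22)*ζ*ds := by
        calc (2*Mφ)*((81/11)*Lγ*ds) = (81/22)*(4*Lγ*Mφ*ds) := by ring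
        _ ≤ (81/22)*(ζ*ds) := by linarith
        _ = (81/22)*ζ*ds := by ring
      calc (2*Mφ)*(3*dy + (81/11)*Lγ*ds) = 6*Mφ*dy + (2*Mφ)*((81/11)*Lγ*ds) := by ring
      _ ≤ 6*Mφ*dy + (81/22)*ζ*ds := by linarith
    calc |((g' - f') - (g - f))*(h'*(a' + y')) + (g - f)*(h'*(a' + y') - h*(a + y))|
        ≤ |((g' - f') - (g - f))*(h'*(a' + y'))| + |(g - f)*(h'*(a' + y') - h*(a + y))| :=
          abs_add_le _ _
    _ ≤ (105/22)*ζ*ds + 6*Mφ*dy := by linarith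
  -- final
  have efin : τ' - τ - (s' - s)
      = 4*(a'*f' - a*f) + 2*((g' - f')*h'*(a' + y') - (g - f)*h*(a + y)) := by
    rw [hτ, hτ']; ring
  rw [efin]
  have t4 : |4*(a'*f' - a*f)| ≤ 4*(Lγ*ds*Mφ + Mγ*(Lφ*ds)) := by
    rw [abs_mul, show |(4:ℝ)| = 4 from by norm_num]
    linarith
  have t5 : |2*((g' - f')*h'*(a' + y') - (g - f)*h*(a + y))| ≤ 2*((105/22)*ζ*ds + 6*Mφ*dy) := by
    rw [abs_mul, show |(2:ℝ)| = 2 from by norm_num]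
    linarith
  have c3 : 4*(Lγ*ds*Mφ + Mγ*(Lφ*ds)) ≤ 2*ζ*ds := by
    have hp1 := mul_le_mul_of_nonneg_right p1 hds0
    have hp2 := mul_le_mul_of_nonneg_right p2 hds0
    calc 4*(Lγ*ds*Mφ + Mγ*(Lφ*ds)) = 4*Lγ*Mφ*ds + 4*Mγ*Lφ*ds := by ring
    _ ≤ ζ*ds + ζ*ds := by linarith
    _ = 2*ζ*ds := by ring
  have czeta : (127/11)*ζ*ds ≤ (1/2)*ds := by
    have hp := mul_le_mul_of_nonneg_right hζ hds0
    have hz0 : 0 ≤ ζ*ds := mul_nonneg hζ0 hds0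
    calc (127/11)*ζ*ds = (127/11)*(ζ*ds) := by ring
    _ ≤ (127/11)*((1/24)*ds) := by linarith
    _ ≤ (1/2)*ds := by linarith
  calc |4*(a'*f' - a*f) + 2*((g' - f')*h'*(a' + y') - (g - f)*h*(a + y))|
      ≤ |4*(a'*f' - a*f)| + |2*((g' - f')*h'*(a' + y') - (g - f)*h*(a + y))| := abs_add_le _ _
  _ ≤ (1/2)*ds + 12*Mφ*dy := by linarith

/-- Local Lipschitz estimate for the x-coordinate along the ruled surface. -/
private lemma x_est (Mφ Lγ Lφ ds dy ω a a' b b' f f' g g' h h' y y' : ℝ)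
    (hMφ0 : 0 ≤ Mφ)
    (hω : 0 < ω) (hwω : ω ≤ b - a)
    (hh0 : 0 ≤ h) (hh1 : h ≤ 1) (hh0' : 0 ≤ h') (hh1' : h' ≤ 1)
    (hy : y = a + h*(b - a)) (hy' : y' = a' + h'*(b' - a'))
    (hbdf : |f| ≤ Mφ) (hbdg : |g| ≤ Mφ)
    (la : |a' - a| ≤ Lγ*ds) (lb : |b' - b| ≤ (13/11)*Lγ*ds)
    (lf : |f' - f| ≤ Lφ*ds) (lg : |g' - g| ≤ (13/11)*Lφ*ds)
    (hdy : |y' - y| ≤ dy) (hds0 : 0 ≤ ds) (hdy0 : 0 ≤ dy) :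
    |((1 - h')*f' + h'*g') - ((1 - h)*f + h*g)|
      ≤ (35/11)*Lφ*ds + (2*Mφ/ω)*(dy + (35/11)*Lγ*ds) := by
  have hDw : |(b' - a') - (b - a)| ≤ (24/11)*Lγ*ds := by
    have e : (b' - a') - (b - a) = (b' - b) - (a' - a) := by ring
    rw [e]; exact (habs_sub' _ _).trans (by linarith)
  have hhw : |(h' - h)*(b - a)| ≤ dy + (35/11)*Lγ*ds := by
    have e : (h' - h)*(b - a) = ((y' - y) - (a' - a)) - h'*((b' - a') - (b - a)) := by
      rw [hy, hy']; ring
    rw [e]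
    have t1 : |(y' - y) - (a' - a)| ≤ dy + Lγ*ds := (habs_sub' _ _).trans (add_le_add hdy la)
    have t2 : |h'*((b' - a') - (b - a))| ≤ (24/11)*Lγ*ds := by
      have := habs_mul' (x := h') (c := 1) (by rw [abs_of_nonneg hh0']; exact hh1') hDw
      linarith
    exact (habs_sub' _ _).trans (by linarith)
  have hhd : |h' - h| ≤ (dy + (35/11)*Lγ*ds)/ω := by
    rw [le_div_iff₀ hω]
    calc |h' - h| *ω ≤ |h' - h| *(b - a) := by
          apply mul_le_mul_of_nonneg_left hwω (abs_nonneg _)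
    _ = |(h' - h)*(b - a)| := by
          rw [abs_mul, abs_of_nonneg (by linarith : (0:ℝ) ≤ b - a)]
    _ ≤ dy + (35/11)*Lγ*ds := hhw
  have hdx : |g - f| ≤ 2*Mφ := (habs_sub' _ _).trans (by linarith)
  have e : ((1 - h')*f' + h'*g') - ((1 - h)*f + h*g)
      = (f' - f) + h'*((g' - f') - (g - f)) + (h' - h)*(g - f) := by ring
  rw [e]
  have hddx : |(g' - f') - (g - f)| ≤ (24/11)*Lφ*ds := by
    have e2 : (g' - f') - (g - f) = (g' - g) - (f' - f) := by ring
    rw [e2]; exact (habs_sub' _ _).trans (by linarith)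
  have t1 : |h'*((g' - f') - (g - f))| ≤ (24/11)*Lφ*ds := by
    have := habs_mul' (x := h') (c := 1) (by rw [abs_of_nonneg hh0']; exact hh1') hddx
    linarith
  have t2 : |(h' - h)*(g - f)| ≤ ((dy + (35/11)*Lγ*ds)/ω)*(2*Mφ) := habs_mul' hhd hdx
  have t3 : ((dy + (35/11)*Lγ*ds)/ω)*(2*Mφ) = (2*Mφ/ω)*(dy + (35/11)*Lγ*ds) := by
    field_simp
  rw [t3] at t2
  calc |(f' - f) + h'*((g' - f') - (g - f)) + (h' - h)*(g - f)|
      ≤ |(f' - f) + h'*((g' - f') - (g - f))| + |(h' - h)*(g - f)| := abs_add_le _ _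
  _ ≤ (|f' - f| + |h'*((g' - f') - (g - f))|) + |(h' - h)*(g - f)| := by
        have := abs_add_le (f' - f) (h'*((g' - f') - (g - f))); linarith
  _ ≤ (35/11)*Lφ*ds + (2*Mφ/ω)*(dy + (35/11)*Lγ*ds) := by linarith
set_option maxHeartbeats 1600000 in
/-- the ruled surface `R_φ` is also a right intrinsic graph: with
`D^r = π^r(R_φ)`, `D^r` is open and `R_φ = S^r_{u^r}` for a locally Lipschitz
`u^r : D^r → ℝ`. -/
theorem stmt_12 (tb : ℝ) (htb : 0 < tb)
    (γ₁ γ₂ φ₁ φ₂ : ℝ → ℝ) (Mγ Lγ Mφ Lφ : NNReal)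
    (hγ₁lip : LipschitzOnWith Lγ γ₁ (Set.Icc 0 tb))
    (hγ₂lip : LipschitzOnWith Lγ γ₂ (Set.Icc 0 tb))
    (hγ₁bd : ∀ s ∈ Set.Icc 0 tb, |γ₁ s| ≤ (Mγ : ℝ))
    (hγ₂bd : ∀ s ∈ Set.Icc 0 tb, |γ₂ s| ≤ (Mγ : ℝ))
    (hφ₁lip : LipschitzOnWith Lφ φ₁ (Set.Icc 0 tb))
    (hφ₂lip : LipschitzOnWith Lφ φ₂ (Set.Icc 0 tb))
    (hφ₁bd : ∀ s ∈ Set.Icc 0 tb, |φ₁ s| ≤ (Mφ : ℝ))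
    (hφ₂bd : ∀ s ∈ Set.Icc 0 tb, |φ₂ s| ≤ (Mφ : ℝ))
    (hsign : ∀ t ∈ Set.Ioo 0 tb, γ₁ t < 0 ∧ 0 < γ₂ t)
    (hγ₁0 : γ₁ 0 = 0) (hγ₁t : γ₁ tb = 0) (hγ₂0 : γ₂ 0 = 0) (hγ₂t : γ₂ tb = 0)
    (hφ0 : φ₁ 0 = φ₂ 0) (hφt : φ₁ tb = φ₂ tb)
    (hconv : ConvexOn ℝ (Set.Icc 0 tb) γ₁)
    (hconc : ConcaveOn ℝ (Set.Icc 0 tb) γ₂)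
    (zeta : ℝ) (hzdef : zeta = 4 * ((Mγ : ℝ) + (Lγ : ℝ)) * ((Mφ : ℝ) + (Lφ : ℝ)))
    (hzeta : zeta < (Real.sqrt 721 - 25) / 48)
    (lam : ℝ → ℝ)
    (hlam_bij : Set.BijOn lam (Set.Icc 0 tb) (Set.Icc 0 tb))
    (hlam_mono : StrictMonoOn lam (Set.Icc 0 tb))
    (hlam_sol : ∀ s ∈ Set.Icc 0 tb, Qphi γ₁ γ₂ φ₁ φ₂ s (lam s) = 0)
    (hlam0 : lam 0 = 0) (hlamt : lam tb = tb)
    :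
    IsOpen (piR '' (heisRho γ₁ γ₂ φ₁ φ₂ lam '' (Set.Ioo (0:ℝ) 1 ×ˢ Set.Ioo (0:ℝ) tb))) ∧
    ∃ ur : ℝ × ℝ → ℝ,
      -- u^r is locally Lipschitz on D^r
      (∀ w ∈ piR '' (heisRho γ₁ γ₂ φ₁ φ₂ lam '' (Set.Ioo (0:ℝ) 1 ×ˢ Set.Ioo (0:ℝ) tb)),
        ∃ ε > (0:ℝ), ∃ K : NNReal,
          LipschitzOnWith K ur (Metric.ball w ε ∩
            piR '' (heisRho γ₁ γ₂ φ₁ φ₂ lam '' (Set.Ioo (0:ℝ) 1 ×ˢ Set.Ioo (0:ℝ) tb)))) ∧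
      -- R_φ = S^r_{u^r}
      heisRho γ₁ γ₂ φ₁ φ₂ lam '' (Set.Ioo (0:ℝ) 1 ×ˢ Set.Ioo (0:ℝ) tb)
        = (fun w : ℝ × ℝ => (ur w, w.1, w.2 - 2 * w.1 * ur w)) ''
            (piR '' (heisRho γ₁ γ₂ φ₁ φ₂ lam '' (Set.Ioo (0:ℝ) 1 ×ˢ Set.Ioo (0:ℝ) tb))) := by
  classical
  -- basic coercion facts
  have hMγ0 : (0:ℝ) ≤ (Mγ:ℝ) := Mγ.coe_nonneg
  have hLγ0 : (0:ℝ) ≤ (Lγ:ℝ) := Lγ.coe_nonneg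
  have hMφ0 : (0:ℝ) ≤ (Mφ:ℝ) := Mφ.coe_nonneg
  have hLφ0 : (0:ℝ) ≤ (Lφ:ℝ) := Lφ.coe_nonneg
  have hζ0 : 0 ≤ zeta := by rw [hzdef]; positivity
  have hζ : zeta ≤ 1/24 := by
    have h729 : Real.sqrt 729 = 27 := by
      rw [show (729:ℝ) = 27^2 by norm_num, Real.sqrt_sq (by norm_num : (0:ℝ) ≤ 27)]
    have h27 : Real.sqrt 721 < 27 := by
      rw [← h729]
      exact Real.sqrt_lt_sqrt (by norm_num) (by norm_num)
    linarith
  have p1 : 4*(Lγ:ℝ)*(Mφ:ℝ) ≤ zeta := by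
    rw [hzdef]
    linarith [mul_nonneg hMγ0 hMφ0, mul_nonneg hMγ0 hLφ0, mul_nonneg hLγ0 hLφ0]
  have p2 : 4*(Mγ:ℝ)*(Lφ:ℝ) ≤ zeta := by
    rw [hzdef]
    linarith [mul_nonneg hMγ0 hMφ0, mul_nonneg hLγ0 hMφ0, mul_nonneg hLγ0 hLφ0]
  -- sets
  obtain ⟨S, hSdef⟩ : ∃ S : Set (ℝ × ℝ), S = Set.Ioo (0:ℝ) 1 ×ˢ Set.Ioo (0:ℝ) tb := ⟨_, rfl⟩
  obtain ⟨ρ, hρdef⟩ : ∃ ρ : ℝ × ℝ → ℝ × ℝ × ℝ, ρ = heisRho γ₁ γ₂ φ₁ φ₂ lam := ⟨_, rfl⟩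
  rw [← hρdef, ← hSdef]
  have hIccSub : Set.Ioo (0:ℝ) tb ⊆ Set.Icc 0 tb := Set.Ioo_subset_Icc_self
  have hlamIcc : ∀ s ∈ Set.Icc (0:ℝ) tb, lam s ∈ Set.Icc (0:ℝ) tb := fun s hs =>
    hlam_bij.mapsTo hs
  have hlamIoo : ∀ s ∈ Set.Ioo (0:ℝ) tb, lam s ∈ Set.Ioo (0:ℝ) tb := by
    intro s hs
    have h0 : (0:ℝ) ∈ Set.Icc (0:ℝ) tb := Set.left_mem_Icc.2 htb.le
    have ht : tb ∈ Set.Icc (0:ℝ) tb := Set.right_mem_Icc.2 htb.le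
    have hsI : s ∈ Set.Icc (0:ℝ) tb := hIccSub hs
    exact ⟨hlam0 ▸ hlam_mono h0 hsI hs.1, hlamt ▸ hlam_mono hsI ht hs.2⟩
  -- Lipschitz statements over ℝ
  have lipγ₁ : ∀ s ∈ Set.Icc (0:ℝ) tb, ∀ s' ∈ Set.Icc (0:ℝ) tb,
      |γ₁ s' - γ₁ s| ≤ (Lγ:ℝ)*|s' - s| := by
    intro s hs s' hs'
    have := hγ₁lip.dist_le_mul s' hs' s hs
    simpa [Real.dist_eq] using this
  have lipγ₂ : ∀ s ∈ Set.Icc (0:ℝ) tb, ∀ s' ∈ Set.Icc (0:ℝ) tb,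
      |γ₂ s' - γ₂ s| ≤ (Lγ:ℝ)*|s' - s| := by
    intro s hs s' hs'
    have := hγ₂lip.dist_le_mul s' hs' s hs
    simpa [Real.dist_eq] using this
  have lipφ₁ : ∀ s ∈ Set.Icc (0:ℝ) tb, ∀ s' ∈ Set.Icc (0:ℝ) tb,
      |φ₁ s' - φ₁ s| ≤ (Lφ:ℝ)*|s' - s| := by
    intro s hs s' hs'
    have := hφ₁lip.dist_le_mul s' hs' s hs
    simpa [Real.dist_eq] using this
  have lipφ₂ : ∀ s ∈ Set.Icc (0:ℝ) tb, ∀ s' ∈ Set.Icc (0:ℝ) tb,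
      |φ₂ s' - φ₂ s| ≤ (Lφ:ℝ)*|s' - s| := by
    intro s hs s' hs'
    have := hφ₂lip.dist_le_mul s' hs' s hs
    simpa [Real.dist_eq] using this
  have lamsol : ∀ s ∈ Set.Icc (0:ℝ) tb,
      lam s = s - 2*(γ₂ (lam s) - γ₁ s)*(φ₂ (lam s) + φ₁ s) := by
    intro s hs
    have h := hlam_sol s hs
    simp only [Qphi] at h
    linarith
  have lamlip : ∀ s ∈ Set.Icc (0:ℝ) tb, ∀ s' ∈ Set.Icc (0:ℝ) tb,
      |lam s' - lam s| ≤ (13/11)*|s' - s| := by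
    intro s hs s' hs'
    exact lam_lip_core zeta Mγ Lγ Mφ Lφ s s' (lam s) (lam s') (γ₁ s) (γ₁ s')
      (γ₂ (lam s)) (γ₂ (lam s')) (φ₁ s) (φ₁ s') (φ₂ (lam s)) (φ₂ (lam s'))
      hζ p1 p2 (hγ₁bd s hs) (hγ₂bd _ (hlamIcc s hs)) (hφ₁bd s' hs') (hφ₂bd _ (hlamIcc s' hs'))
      (lipγ₁ s hs s' hs') (lipγ₂ (lam s) (hlamIcc s hs) (lam s') (hlamIcc s' hs'))
      (lipφ₁ s hs s' hs') (lipφ₂ (lam s) (hlamIcc s hs) (lam s') (hlamIcc s' hs'))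
      (lamsol s hs) (lamsol s' hs')
  have lipb : ∀ s ∈ Set.Icc (0:ℝ) tb, ∀ s' ∈ Set.Icc (0:ℝ) tb,
      |γ₂ (lam s') - γ₂ (lam s)| ≤ (13/11)*(Lγ:ℝ)*|s' - s| := by
    intro s hs s' hs'
    calc |γ₂ (lam s') - γ₂ (lam s)| ≤ (Lγ:ℝ)*|lam s' - lam s| :=
          lipγ₂ (lam s) (hlamIcc s hs) (lam s') (hlamIcc s' hs')
    _ ≤ (Lγ:ℝ)*((13/11)*|s' - s|) := mul_le_mul_of_nonneg_left (lamlip s hs s' hs') hLγ0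
    _ = (13/11)*(Lγ:ℝ)*|s' - s| := by ring
  have lipg : ∀ s ∈ Set.Icc (0:ℝ) tb, ∀ s' ∈ Set.Icc (0:ℝ) tb,
      |φ₂ (lam s') - φ₂ (lam s)| ≤ (13/11)*(Lφ:ℝ)*|s' - s| := by
    intro s hs s' hs'
    calc |φ₂ (lam s') - φ₂ (lam s)| ≤ (Lφ:ℝ)*|lam s' - lam s| :=
          lipφ₂ (lam s) (hlamIcc s hs) (lam s') (hlamIcc s' hs')
    _ ≤ (Lφ:ℝ)*((13/11)*|s' - s|) := mul_le_mul_of_nonneg_left (lamlip s hs s' hs') hLφ0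
    _ = (13/11)*(Lφ:ℝ)*|s' - s| := by ring
  -- the projected coordinates of the ruled surface
  obtain ⟨Yf, hYf⟩ : ∃ f : ℝ × ℝ → ℝ, f = fun q => γ₁ q.2 + q.1*(γ₂ (lam q.2) - γ₁ q.2) :=
    ⟨_, rfl⟩
  obtain ⟨Tf, hTf⟩ : ∃ f : ℝ × ℝ → ℝ, f = fun q => q.2 + 4*γ₁ q.2*φ₁ q.2
      + 2*(φ₂ (lam q.2) - φ₁ q.2)*q.1*(γ₁ q.2 + Yf q) := ⟨_, rfl⟩
  have hpirho : ∀ q ∈ S, piR (ρ q) = (Yf q, Tf q) := by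
    intro q hq
    obtain ⟨h, s⟩ := q
    rw [hSdef] at hq
    simp only [Set.mem_prod, Set.mem_Ioo] at hq
    have hsI : s ∈ Set.Icc (0:ℝ) tb := hIccSub ⟨hq.2.1, hq.2.2⟩
    have hl := lamsol s hsI
    simp only [hρdef, hYf, hTf, heisRho, heisP, piR, Prod.smul_mk, smul_eq_mul,
      Prod.mk_add_mk, Prod.mk.injEq]
    constructor
    · ring
    · linear_combination h * hl
  have hwpos : ∀ s ∈ Set.Ioo (0:ℝ) tb, 0 < γ₂ (lam s) - γ₁ s := by
    intro s hs
    have h1 := (hsign s hs).1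
    have h2 := (hsign (lam s) (hlamIoo s hs)).2
    linarith
  -- the key quantitative estimates
  have main_est : ∀ h s h' s', (h, s) ∈ S → (h', s') ∈ S →
      |Tf (h', s') - Tf (h, s) - (s' - s)|
        ≤ (1/2)*|s' - s| + 12*(Mφ:ℝ)*|Yf (h', s') - Yf (h, s)| := by
    intro h s h' s' hq hq'
    rw [hSdef] at hq hq'
    simp only [Set.mem_prod, Set.mem_Ioo] at hq hq'
    have hsO : s ∈ Set.Ioo (0:ℝ) tb := ⟨hq.2.1, hq.2.2⟩
    have hsO' : s' ∈ Set.Ioo (0:ℝ) tb := ⟨hq'.2.1, hq'.2.2⟩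
    have hsI : s ∈ Set.Icc (0:ℝ) tb := hIccSub hsO
    have hsI' : s' ∈ Set.Icc (0:ℝ) tb := hIccSub hsO'
    exact key_est zeta Mγ Lγ Mφ Lφ s s' (γ₁ s) (γ₁ s') (γ₂ (lam s)) (γ₂ (lam s'))
      (φ₁ s) (φ₁ s') (φ₂ (lam s)) (φ₂ (lam s')) h h' (Yf (h, s)) (Yf (h', s'))
      (Tf (h, s)) (Tf (h', s')) (|s' - s|) (|Yf (h', s') - Yf (h, s)|)
      hζ hζ0 hMφ0 p1 p2 (abs_nonneg _) (abs_nonneg _) le_rfl le_rfl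
      (hγ₁bd s hsI) (hγ₁bd s' hsI') (hγ₂bd _ (hlamIcc s hsI)) (hγ₂bd _ (hlamIcc s' hsI'))
      (hφ₁bd s hsI) (hφ₁bd s' hsI') (hφ₂bd _ (hlamIcc s hsI)) (hφ₂bd _ (hlamIcc s' hsI'))
      (lipγ₁ s hsI s' hsI') (lipb s hsI s' hsI') (lipφ₁ s hsI s' hsI') (lipg s hsI s' hsI')
      hq.1.1.le hq.1.2.le hq'.1.1.le hq'.1.2.le
      (hsign s hsO).1.le (hsign (lam s) (hlamIoo s hsO)).2.le
      (hsign s' hsO').1.le (hsign (lam s') (hlamIoo s' hsO')).2.le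
      (by simp [hYf]) (by simp [hYf]) (by simp [hTf]) (by simp [hTf])
  have s_est : ∀ h s h' s', (h, s) ∈ S → (h', s') ∈ S →
      |s' - s| ≤ 2*|Tf (h', s') - Tf (h, s)| + 24*(Mφ:ℝ)*|Yf (h', s') - Yf (h, s)| := by
    intro h s h' s' hq hq'
    have h1 := main_est h s h' s' hq hq'
    have h2 : |s' - s| ≤ |Tf (h', s') - Tf (h, s)| + |Tf (h', s') - Tf (h, s) - (s' - s)| := by
      have e : s' - s = (Tf (h', s') - Tf (h, s)) - (Tf (h', s') - Tf (h, s) - (s' - s)) := by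
        ring
      calc |s' - s| = |(Tf (h', s') - Tf (h, s)) - (Tf (h', s') - Tf (h, s) - (s' - s))| := by
            rw [← e]
      _ ≤ _ := habs_sub' _ _
    linarith
  -- injectivity of the projected parametrization
  have hFinj : ∀ q ∈ S, ∀ q' ∈ S, Yf q = Yf q' → Tf q = Tf q' → q = q' := by
    intro q hq q' hq' hYe hTe
    obtain ⟨h, s⟩ := q
    obtain ⟨h', s'⟩ := q'
    have h1 := s_est h s h' s' hq hq'
    rw [hYe, hTe] at h1
    simp only [sub_self, abs_zero] at h1
    have hs2 : s' = s := by
      have h0 : |s' - s| ≤ 0 := by linarith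
      have h0' := abs_nonneg (s' - s)
      have := abs_eq_zero.1 (le_antisymm h0 h0')
      linarith
    rw [hSdef] at hq
    simp only [Set.mem_prod, Set.mem_Ioo] at hq
    have hw : 0 < γ₂ (lam s) - γ₁ s := hwpos s ⟨hq.2.1, hq.2.2⟩
    simp only [hYf] at hYe
    rw [hs2] at hYe
    have h3 : h*(γ₂ (lam s) - γ₁ s) = h'*(γ₂ (lam s) - γ₁ s) := by linarith
    have h4 : h = h' := mul_right_cancel₀ (ne_of_gt hw) h3
    rw [h4, hs2]
  have hPinj : ∀ p ∈ ρ '' S, ∀ p' ∈ ρ '' S, piR p = piR p' → p = p' := by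
    rintro p ⟨q, hq, rfl⟩ p' ⟨q', hq', rfl⟩ he
    rw [hpirho q hq, hpirho q' hq', Prod.mk.injEq] at he
    rw [hFinj q hq q' hq' he.1 he.2]
  have hsec : ∀ p ∈ ρ '' S, Function.invFunOn piR (ρ '' S) (piR p) = p := by
    intro p hp
    have hex : ∃ a ∈ ρ '' S, piR a = piR p := ⟨p, hp, rfl⟩
    exact hPinj _ (Function.invFunOn_mem hex) p hp (Function.invFunOn_eq hex)
  refine ⟨?_, fun w => (Function.invFunOn piR (ρ '' S) w).1, ?_, ?_⟩
  · -- openness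
    rw [Metric.isOpen_iff]
    rintro w ⟨p, ⟨q0, hq0S, rfl⟩, rfl⟩
    obtain ⟨h₀, s₀⟩ := q0
    have hq0S' := hq0S
    rw [hSdef] at hq0S'
    simp only [Set.mem_prod, Set.mem_Ioo] at hq0S'
    obtain ⟨hh₀, hs₀'⟩ := hq0S'
    have hs₀ : s₀ ∈ Set.Ioo (0:ℝ) tb := hs₀'
    have hw₀ : 0 < γ₂ (lam s₀) - γ₁ s₀ := hwpos s₀ hs₀
    have hy₀a : γ₁ s₀ < Yf (h₀, s₀) := by
      have hp0 : 0 < h₀*(γ₂ (lam s₀) - γ₁ s₀) := mul_pos hh₀.1 hw₀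
      simp only [hYf]
      linarith [hp0]
    have hy₀b : Yf (h₀, s₀) < γ₂ (lam s₀) := by
      have hp0 : 0 < (1 - h₀)*(γ₂ (lam s₀) - γ₁ s₀) := mul_pos (by linarith [hh₀.2]) hw₀
      simp only [hYf]
      linarith [hp0]
    rw [hpirho (h₀, s₀) hq0S]
    obtain ⟨CL, hCL⟩ : ∃ c : ℝ, c = (24/11)*(Lγ:ℝ) + 1 := ⟨_, rfl⟩
    have hCL0 : 0 < CL := by rw [hCL]; positivity
    obtain ⟨δ, hδdef⟩ : ∃ d : ℝ, d = min (min (s₀/2) ((tb - s₀)/2))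
        (min ((Yf (h₀, s₀) - γ₁ s₀)/(4*CL)) ((γ₂ (lam s₀) - Yf (h₀, s₀))/(4*CL))) := ⟨_, rfl⟩
    have hδ0 : 0 < δ := by
      rw [hδdef]
      refine lt_min (lt_min (by linarith [hs₀.1]) (by linarith [hs₀.2]))
        (lt_min (div_pos (by linarith) (by positivity)) (div_pos (by linarith) (by positivity)))
    obtain ⟨ε, hεdef⟩ : ∃ e : ℝ, e = min (min ((Yf (h₀, s₀) - γ₁ s₀)/8)
        ((γ₂ (lam s₀) - Yf (h₀, s₀))/8)) (δ/(4*(1 + 12*(Mφ:ℝ)))) := ⟨_, rfl⟩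
    have hε0 : 0 < ε := by
      rw [hεdef]
      exact lt_min (lt_min (by linarith) (by linarith)) (div_pos hδ0 (by positivity))
    refine ⟨ε, hε0, ?_⟩
    rintro ⟨y₁, τ₁⟩ hball
    simp only [Metric.mem_ball, Prod.dist_eq, Real.dist_eq, max_lt_iff] at hball
    obtain ⟨hd1, hd2⟩ := hball
    have hd1' := abs_lt.1 hd1
    have hd2' := abs_lt.1 hd2
    -- min facts
    have hδ1 : δ ≤ s₀/2 := by
      rw [hδdef]; exact le_trans (min_le_left _ _) (min_le_left _ _)
    have hδ2 : δ ≤ (tb - s₀)/2 := by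
      rw [hδdef]; exact le_trans (min_le_left _ _) (min_le_right _ _)
    have hδ3 : δ ≤ (Yf (h₀, s₀) - γ₁ s₀)/(4*CL) := by
      rw [hδdef]; exact le_trans (min_le_right _ _) (min_le_left _ _)
    have hδ4 : δ ≤ (γ₂ (lam s₀) - Yf (h₀, s₀))/(4*CL) := by
      rw [hδdef]; exact le_trans (min_le_right _ _) (min_le_right _ _)
    have hε1 : ε ≤ (Yf (h₀, s₀) - γ₁ s₀)/8 := by
      rw [hεdef]; exact le_trans (min_le_left _ _) (min_le_left _ _)
    have hε2 : ε ≤ (γ₂ (lam s₀) - Yf (h₀, s₀))/8 := by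
      rw [hεdef]; exact le_trans (min_le_left _ _) (min_le_right _ _)
    have hε3 : ε ≤ δ/(4*(1 + 12*(Mφ:ℝ))) := by
      rw [hεdef]; exact min_le_right _ _
    have hδ3' : CL*δ ≤ (Yf (h₀, s₀) - γ₁ s₀)/4 := by
      calc CL*δ ≤ CL*((Yf (h₀, s₀) - γ₁ s₀)/(4*CL)) := mul_le_mul_of_nonneg_left hδ3 hCL0.le
      _ = (Yf (h₀, s₀) - γ₁ s₀)/4 := by
        field_simp
    have hδ4' : CL*δ ≤ (γ₂ (lam s₀) - Yf (h₀, s₀))/4 := by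
      calc CL*δ ≤ CL*((γ₂ (lam s₀) - Yf (h₀, s₀))/(4*CL)) := mul_le_mul_of_nonneg_left hδ4 hCL0.le
      _ = (γ₂ (lam s₀) - Yf (h₀, s₀))/4 := by
        field_simp
    have hε3' : ε*(1 + 12*(Mφ:ℝ)) ≤ δ/4 := by
      have h12 : (0:ℝ) < 1 + 12*(Mφ:ℝ) := by positivity
      calc ε*(1 + 12*(Mφ:ℝ)) ≤ (δ/(4*(1 + 12*(Mφ:ℝ))))*(1 + 12*(Mφ:ℝ)) :=
            mul_le_mul_of_nonneg_right hε3 h12.le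
      _ = δ/4 := by field_simp
    -- the interval
    have hIsub : Set.Icc (s₀ - δ) (s₀ + δ) ⊆ Set.Ioo 0 tb := by
      intro σ hσ
      exact ⟨by linarith [hσ.1, hs₀.1], by linarith [hσ.2, hs₀.2]⟩
    have hIsub' : Set.Icc (s₀ - δ) (s₀ + δ) ⊆ Set.Icc 0 tb := fun σ hσ => hIccSub (hIsub hσ)
    have hs₀I : s₀ ∈ Set.Icc (0:ℝ) tb := hIccSub hs₀
    -- admissibility of y₁ over the interval
    have hadm : ∀ σ ∈ Set.Icc (s₀ - δ) (s₀ + δ), γ₁ σ < y₁ ∧ y₁ < γ₂ (lam σ) := by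
      intro σ hσ
      have hσI : σ ∈ Set.Icc (0:ℝ) tb := hIsub' hσ
      have habsσ : |σ - s₀| ≤ δ := abs_le.2 ⟨by linarith [hσ.1], by linarith [hσ.2]⟩
      have l1 : |γ₁ σ - γ₁ s₀| ≤ (Lγ:ℝ)*δ :=
        (lipγ₁ s₀ hs₀I σ hσI).trans (mul_le_mul_of_nonneg_left habsσ hLγ0)
      have l2 : |γ₂ (lam σ) - γ₂ (lam s₀)| ≤ (13/11)*(Lγ:ℝ)*δ :=
        (lipb s₀ hs₀I σ hσI).trans (mul_le_mul_of_nonneg_left habsσ (by positivity))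
      have e1 : (Lγ:ℝ)*δ ≤ CL*δ := by
        rw [hCL]; linarith [mul_nonneg hLγ0 hδ0.le, hδ0.le]
      have e2 : (13/11)*(Lγ:ℝ)*δ ≤ CL*δ := by
        rw [hCL]; linarith [mul_nonneg hLγ0 hδ0.le, hδ0.le]
      rw [abs_le] at l1 l2
      constructor
      · linarith [l1.2, hd1'.1]
      · linarith [l2.1, hd1'.2]
    have hwσ : ∀ σ ∈ Set.Icc (s₀ - δ) (s₀ + δ), 0 < γ₂ (lam σ) - γ₁ σ := fun σ hσ =>
      hwpos σ (hIsub hσ)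
    obtain ⟨H, hH⟩ : ∃ f : ℝ → ℝ, f = fun σ => (y₁ - γ₁ σ)/(γ₂ (lam σ) - γ₁ σ) := ⟨_, rfl⟩
    have hqS : ∀ σ ∈ Set.Icc (s₀ - δ) (s₀ + δ), (H σ, σ) ∈ S := by
      intro σ hσ
      rw [hSdef]
      simp only [Set.mem_prod, Set.mem_Ioo, hH]
      refine ⟨⟨div_pos (by linarith [(hadm σ hσ).1]) (hwσ σ hσ), ?_⟩,
        (hIsub hσ).1, (hIsub hσ).2⟩
      exact (div_lt_one (hwσ σ hσ)).2 (by linarith [(hadm σ hσ).2])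
    have hYσ : ∀ σ ∈ Set.Icc (s₀ - δ) (s₀ + δ), Yf (H σ, σ) = y₁ := by
      intro σ hσ
      have hne := (hwσ σ hσ).ne'
      simp only [hYf, hH]
      rw [div_mul_cancel₀ _ hne]
      ring
    obtain ⟨Gf, hGf⟩ : ∃ f : ℝ → ℝ, f = fun σ => Tf (H σ, σ) := ⟨_, rfl⟩
    -- continuity
    have hcont : ContinuousOn Gf (Set.Icc (s₀ - δ) (s₀ + δ)) := by
      have c1 : ContinuousOn γ₁ (Set.Icc (s₀ - δ) (s₀ + δ)) :=
        (hγ₁lip.continuousOn).mono hIsub'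
      have clam : ContinuousOn lam (Set.Icc (0:ℝ) tb) := by
        refine LipschitzOnWith.continuousOn (K := (13/11 : NNReal)) ?_
        rw [lipschitzOnWith_iff_dist_le_mul]
        intro x hx y hy
        rw [Real.dist_eq, Real.dist_eq]
        have := lamlip y hy x hx
        simpa using this
      have clam' : ContinuousOn lam (Set.Icc (s₀ - δ) (s₀ + δ)) := clam.mono hIsub'
      have c2 : ContinuousOn (fun σ => γ₂ (lam σ)) (Set.Icc (s₀ - δ) (s₀ + δ)) :=
        ContinuousOn.comp (hγ₂lip.continuousOn) clam' (fun σ hσ => hlamIcc σ (hIsub' hσ))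
      have c3 : ContinuousOn φ₁ (Set.Icc (s₀ - δ) (s₀ + δ)) :=
        (hφ₁lip.continuousOn).mono hIsub'
      have c4 : ContinuousOn (fun σ => φ₂ (lam σ)) (Set.Icc (s₀ - δ) (s₀ + δ)) :=
        ContinuousOn.comp (hφ₂lip.continuousOn) clam' (fun σ hσ => hlamIcc σ (hIsub' hσ))
      have cw : ContinuousOn (fun σ => γ₂ (lam σ) - γ₁ σ) (Set.Icc (s₀ - δ) (s₀ + δ)) :=
        c2.sub c1
      have cH : ContinuousOn H (Set.Icc (s₀ - δ) (s₀ + δ)) := by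
        simp only [hH]
        exact (continuousOn_const.sub c1).div cw (fun σ hσ => (hwσ σ hσ).ne')
      simp only [hGf, hTf, hYf]
      refine ContinuousOn.add (ContinuousOn.add continuousOn_id ?_) ?_
      · exact (continuousOn_const.mul c1).mul c3
      · exact ((continuousOn_const.mul (c4.sub c3)).mul cH).mul
          (c1.add (c1.add (cH.mul cw)))
    -- endpoints
    have hmemL : s₀ - δ ∈ Set.Icc (s₀ - δ) (s₀ + δ) := ⟨le_refl _, by linarith⟩
    have hmemR : s₀ + δ ∈ Set.Icc (s₀ - δ) (s₀ + δ) := ⟨by linarith, le_refl _⟩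
    have hmem₀ : s₀ ∈ Set.Icc (s₀ - δ) (s₀ + δ) := ⟨by linarith, by linarith⟩
    have hqL := hqS _ hmemL
    have hqR := hqS _ hmemR
    have hqc := hqS _ hmem₀
    have habsdL : |(s₀ - δ) - s₀| = δ := by
      rw [show (s₀ - δ) - s₀ = -δ by ring, abs_neg, abs_of_pos hδ0]
    have habsdR : |(s₀ + δ) - s₀| = δ := by
      rw [show (s₀ + δ) - s₀ = δ by ring, abs_of_pos hδ0]
    have k1 := main_est (H s₀) s₀ (H (s₀ - δ)) (s₀ - δ) hqc hqL
    rw [hYσ _ hmemL, hYσ _ hmem₀, sub_self, abs_zero, habsdL] at k1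
    have k1' : Tf (H (s₀ - δ), s₀ - δ) ≤ Tf (H s₀, s₀) - δ/2 := by
      have := (abs_le.1 k1).2
      linarith
    have k1b := main_est (H s₀) s₀ (H (s₀ + δ)) (s₀ + δ) hqc hqR
    rw [hYσ _ hmemR, hYσ _ hmem₀, sub_self, abs_zero, habsdR] at k1b
    have k1b' : Tf (H s₀, s₀) + δ/2 ≤ Tf (H (s₀ + δ), s₀ + δ) := by
      have := (abs_le.1 k1b).1
      linarith
    have k2 := main_est h₀ s₀ (H s₀) s₀ hq0S hqc
    rw [hYσ _ hmem₀] at k2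
    simp only [sub_self, abs_zero, sub_zero] at k2
    have k2' : |Tf (H s₀, s₀) - Tf (h₀, s₀)| ≤ 12*(Mφ:ℝ)*ε := by
      have hmul : 12*(Mφ:ℝ)*|y₁ - Yf (h₀, s₀)| ≤ 12*(Mφ:ℝ)*ε :=
        mul_le_mul_of_nonneg_left hd1.le (by positivity)
      linarith [k2]
    have k2'' := abs_le.1 k2'
    have hεMφ : ε + 12*(Mφ:ℝ)*ε ≤ δ/4 := by linarith [hε3']
    have hlow : Gf (s₀ - δ) ≤ τ₁ := by
      have hGe : Gf (s₀ - δ) = Tf (H (s₀ - δ), s₀ - δ) := by simp only [hGf]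
      rw [hGe]
      linarith [k1', k2''.2, hd2'.1]
    have hhigh : τ₁ ≤ Gf (s₀ + δ) := by
      have hGe : Gf (s₀ + δ) = Tf (H (s₀ + δ), s₀ + δ) := by simp only [hGf]
      rw [hGe]
      linarith [k1b', k2''.1, hd2'.2]
    obtain ⟨σ, hσmem, hσeq⟩ := intermediate_value_Icc (by linarith : s₀ - δ ≤ s₀ + δ) hcont
      ⟨hlow, hhigh⟩
    refine ⟨ρ (H σ, σ), ⟨(H σ, σ), hqS σ hσmem, rfl⟩, ?_⟩
    rw [hpirho _ (hqS σ hσmem), hYσ σ hσmem]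
    have : Tf (H σ, σ) = Gf σ := by simp only [hGf]
    rw [this, hσeq]
  · -- locally Lipschitz
    rintro w ⟨p, ⟨⟨h₀, s₀⟩, hq0S, rfl⟩, rfl⟩
    have hq0S' := hq0S
    rw [hSdef] at hq0S'
    simp only [Set.mem_prod, Set.mem_Ioo] at hq0S'
    obtain ⟨hh₀, hs₀'⟩ := hq0S'
    have hs₀ : s₀ ∈ Set.Ioo (0:ℝ) tb := hs₀'
    have hs₀I : s₀ ∈ Set.Icc (0:ℝ) tb := hIccSub hs₀
    have hw₀ : 0 < γ₂ (lam s₀) - γ₁ s₀ := hwpos s₀ hs₀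
    obtain ⟨C2, hC2⟩ : ∃ c : ℝ, c = 2 + 24*(Mφ:ℝ) := ⟨_, rfl⟩
    have hC20 : 0 < C2 := by rw [hC2]; positivity
    obtain ⟨ω, hωdef⟩ : ∃ c : ℝ, c = (γ₂ (lam s₀) - γ₁ s₀)/2 := ⟨_, rfl⟩
    have hω0 : 0 < ω := by rw [hωdef]; exact div_pos hw₀ two_pos
    obtain ⟨ε, hεdef⟩ : ∃ c : ℝ, c = (γ₂ (lam s₀) - γ₁ s₀)/(2*((24/11)*(Lγ:ℝ) + 1)*C2) :=
      ⟨_, rfl⟩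
    have hε0 : 0 < ε := by
      rw [hεdef]
      exact div_pos hw₀ (by positivity)
    obtain ⟨C, hCdef⟩ : ∃ c : ℝ, c = (35/11)*(Lφ:ℝ)*C2 + (2*(Mφ:ℝ)/ω)*(1 + (35/11)*(Lγ:ℝ)*C2) :=
      ⟨_, rfl⟩
    have hMω : 0 ≤ 2*(Mφ:ℝ)/ω := div_nonneg (by positivity) hω0.le
    have hC0 : 0 ≤ C := by
      have t1 : 0 ≤ (35/11)*(Lφ:ℝ)*C2 := mul_nonneg (by positivity) hC20.le
      have t2 : (0:ℝ) ≤ 1 + (35/11)*(Lγ:ℝ)*C2 := by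
        have := mul_nonneg (show (0:ℝ) ≤ (35/11)*(Lγ:ℝ) by positivity) hC20.le
        linarith
      have t3 := mul_nonneg hMω t2
      rw [hCdef]
      linarith
    refine ⟨ε, hε0, Real.toNNReal C, ?_⟩
    rw [lipschitzOnWith_iff_dist_le_mul]
    rintro u ⟨hub, p, ⟨⟨h, s⟩, hqS, rfl⟩, rfl⟩ v ⟨hvb, p', ⟨⟨h', s'⟩, hq'S, rfl⟩, rfl⟩
    have hqmem := hqS
    rw [hSdef] at hqmem
    simp only [Set.mem_prod, Set.mem_Ioo] at hqmem
    have hq'mem := hq'S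
    rw [hSdef] at hq'mem
    simp only [Set.mem_prod, Set.mem_Ioo] at hq'mem
    have hsO : s ∈ Set.Ioo (0:ℝ) tb := ⟨hqmem.2.1, hqmem.2.2⟩
    have hsO' : s' ∈ Set.Ioo (0:ℝ) tb := ⟨hq'mem.2.1, hq'mem.2.2⟩
    have hsI : s ∈ Set.Icc (0:ℝ) tb := hIccSub hsO
    have hsI' : s' ∈ Set.Icc (0:ℝ) tb := hIccSub hsO'
    -- values of ur
    have hu1 : (Function.invFunOn piR (ρ '' S) (piR (ρ (h, s)))).1 = (ρ (h, s)).1 := by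
      rw [hsec _ ⟨(h, s), hqS, rfl⟩]
    have hu2 : (Function.invFunOn piR (ρ '' S) (piR (ρ (h', s')))).1 = (ρ (h', s')).1 := by
      rw [hsec _ ⟨(h', s'), hq'S, rfl⟩]
    have hx1 : (ρ (h, s)).1 = (1 - h)*φ₁ s + h*φ₂ (lam s) := by
      simp [hρdef, heisRho, heisP]
    have hx2 : (ρ (h', s')).1 = (1 - h')*φ₁ s' + h'*φ₂ (lam s') := by
      simp [hρdef, heisRho, heisP]
    -- distance components
    have hdYT : |Yf (h', s') - Yf (h, s)| ≤ dist (piR (ρ (h, s))) (piR (ρ (h', s'))) := by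
      rw [hpirho (h, s) hqS, hpirho (h', s') hq'S, Prod.dist_eq]
      simp only [Real.dist_eq]
      calc |Yf (h', s') - Yf (h, s)| = |Yf (h, s) - Yf (h', s')| := abs_sub_comm _ _
      _ ≤ _ := le_max_left _ _
    have hdT : |Tf (h', s') - Tf (h, s)| ≤ dist (piR (ρ (h, s))) (piR (ρ (h', s'))) := by
      rw [hpirho (h, s) hqS, hpirho (h', s') hq'S, Prod.dist_eq]
      simp only [Real.dist_eq]
      calc |Tf (h', s') - Tf (h, s)| = |Tf (h, s) - Tf (h', s')| := abs_sub_comm _ _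
      _ ≤ _ := le_max_right _ _
    have hdpos : 0 ≤ dist (piR (ρ (h, s))) (piR (ρ (h', s'))) := dist_nonneg
    -- localization near s₀
    have hloc : ∀ hh ss, (hh, ss) ∈ S →
        piR (ρ (hh, ss)) ∈ Metric.ball (piR (ρ (h₀, s₀))) ε →
        ω ≤ γ₂ (lam ss) - γ₁ ss := by
      intro hh ss hmem hball
      have hmem' := hmem
      rw [hSdef] at hmem'
      simp only [Set.mem_prod, Set.mem_Ioo] at hmem'
      have hssI : ss ∈ Set.Icc (0:ℝ) tb := hIccSub ⟨hmem'.2.1, hmem'.2.2⟩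
      rw [Metric.mem_ball, hpirho (hh, ss) hmem, hpirho (h₀, s₀) hq0S] at hball
      simp only [Prod.dist_eq, Real.dist_eq, max_lt_iff] at hball
      obtain ⟨hb1, hb2⟩ := hball
      have hss₀ : |ss - s₀| ≤ C2*ε := by
        have hest := s_est h₀ s₀ hh ss hq0S hmem
        have m1 : 24*(Mφ:ℝ)*|Yf (hh, ss) - Yf (h₀, s₀)| ≤ 24*(Mφ:ℝ)*ε :=
          mul_le_mul_of_nonneg_left hb1.le (by positivity)
        rw [hC2]
        linarith [hb2.le]
      have l1 := lipγ₁ s₀ hs₀I ss hssI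
      have l2 := lipb s₀ hs₀I ss hssI
      have m2 : (Lγ:ℝ)*|ss - s₀| ≤ (Lγ:ℝ)*(C2*ε) := mul_le_mul_of_nonneg_left hss₀ hLγ0
      have m3 : (13/11)*(Lγ:ℝ)*|ss - s₀| ≤ (13/11)*(Lγ:ℝ)*(C2*ε) :=
        mul_le_mul_of_nonneg_left hss₀ (by positivity)
      have hkey : ε*(2*((24/11)*(Lγ:ℝ) + 1)*C2) = γ₂ (lam s₀) - γ₁ s₀ := by
        rw [hεdef]
        field_simp
      rw [abs_le] at l1 l2
      rw [hωdef]
      linarith [l1.1, l1.2, l2.1, l2.2, m2, m3, hkey, mul_nonneg hC20.le hε0.le]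
    have hWs : ω ≤ γ₂ (lam s) - γ₁ s := hloc h s hqS hub
    have hWs' : ω ≤ γ₂ (lam s') - γ₁ s' := hloc h' s' hq'S hvb
    -- the x-coordinate estimate
    have hxe := x_est (Mφ:ℝ) (Lγ:ℝ) (Lφ:ℝ) (|s' - s|) (|Yf (h', s') - Yf (h, s)|) ω
      (γ₁ s) (γ₁ s') (γ₂ (lam s)) (γ₂ (lam s')) (φ₁ s) (φ₁ s') (φ₂ (lam s)) (φ₂ (lam s'))
      h h' (Yf (h, s)) (Yf (h', s'))
      hMφ0 hω0 hWs hqmem.1.1.le hqmem.1.2.le hq'mem.1.1.le hq'mem.1.2.le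
      (by simp [hYf]) (by simp [hYf]) (hφ₁bd s hsI) (hφ₂bd _ (hlamIcc s hsI))
      (lipγ₁ s hsI s' hsI') (lipb s hsI s' hsI') (lipφ₁ s hsI s' hsI') (lipg s hsI s' hsI')
      le_rfl (abs_nonneg _) (abs_nonneg _)
    -- combine
    have hds_le : |s' - s| ≤ C2*(dist (piR (ρ (h, s))) (piR (ρ (h', s')))) := by
      have hest := s_est h s h' s' hqS hq'S
      have m1 : 24*(Mφ:ℝ)*|Yf (h', s') - Yf (h, s)|
          ≤ 24*(Mφ:ℝ)*(dist (piR (ρ (h, s))) (piR (ρ (h', s')))) :=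
        mul_le_mul_of_nonneg_left hdYT (by positivity)
      rw [hC2]
      linarith [hdT]
    have hfin : (35/11)*(Lφ:ℝ)*|s' - s|
        + (2*(Mφ:ℝ)/ω)*(|Yf (h', s') - Yf (h, s)| + (35/11)*(Lγ:ℝ)*|s' - s|)
        ≤ C*(dist (piR (ρ (h, s))) (piR (ρ (h', s')))) := by
      have b1 : (35/11)*(Lφ:ℝ)*|s' - s|
          ≤ (35/11)*(Lφ:ℝ)*(C2*(dist (piR (ρ (h, s))) (piR (ρ (h', s'))))) :=
        mul_le_mul_of_nonneg_left hds_le (by positivity)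
      have b2 : (35/11)*(Lγ:ℝ)*|s' - s|
          ≤ (35/11)*(Lγ:ℝ)*(C2*(dist (piR (ρ (h, s))) (piR (ρ (h', s'))))) :=
        mul_le_mul_of_nonneg_left hds_le (by positivity)
      have b3 := add_le_add hdYT b2
      have b4 := mul_le_mul_of_nonneg_left b3 hMω
      have e : C*(dist (piR (ρ (h, s))) (piR (ρ (h', s'))))
          = (35/11)*(Lφ:ℝ)*(C2*(dist (piR (ρ (h, s))) (piR (ρ (h', s')))))
            + (2*(Mφ:ℝ)/ω)*((dist (piR (ρ (h, s))) (piR (ρ (h', s'))))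
              + (35/11)*(Lγ:ℝ)*(C2*(dist (piR (ρ (h, s))) (piR (ρ (h', s')))))) := by
        rw [hCdef]
        ring
      linarith [b1, b4]
    -- finish
    rw [hu1, hu2, hx1, hx2, Real.dist_eq, Real.coe_toNNReal C hC0]
    have habs : |((1 - h)*φ₁ s + h*φ₂ (lam s)) - ((1 - h')*φ₁ s' + h'*φ₂ (lam s'))|
        ≤ (35/11)*(Lφ:ℝ)*|s' - s|
          + (2*(Mφ:ℝ)/ω)*(|Yf (h', s') - Yf (h, s)| + (35/11)*(Lγ:ℝ)*|s' - s|) := by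
      rw [abs_sub_comm]
      exact hxe
    linarith [habs, hfin]
  · -- graph equality
    have hrec : ∀ p ∈ ρ '' S,
        ((Function.invFunOn piR (ρ '' S) (piR p)).1, (piR p).1,
          (piR p).2 - 2*(piR p).1*(Function.invFunOn piR (ρ '' S) (piR p)).1) = p := by
      intro p hp
      rw [hsec p hp]
      obtain ⟨x, y, t⟩ := p
      simp only [piR, Prod.mk.injEq]
      exact ⟨trivial, trivial, by ring⟩
    rw [Set.image_image]
    ext p
    constructor
    · intro hp
      exact ⟨p, hp, hrec p hp⟩
    · rintro ⟨p', hp', rfl⟩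
      dsimp only
      rw [hrec p' hp']
      exact hp'
end
end

section
/- Assume D is lenticular (γ₁ convex and γ₂ concave on I) and ζ < (√721 − 25)/48. Then the map G : Q → ℝ², G(h,s) = (ρ₂(h,s), ρ₃(h,s) + 2ρ₁(h,s)ρ₂(h,s)) — i.e. the composition of ρ with the projection π^r(x,y,t) = (y, t+2xy) onto W along the integral curves of the right-invariant field X^r = ∂_x − 2y∂_t — is injective on Q = (0,1)×I. -/
open Set

set_option maxHeartbeats 1000000

noncomputable section

lemma stmt13_core (Mγ Lγ Mφ Lφ zeta : ℝ)
    (hMγ : 0 ≤ Mγ) (hLγ : 0 ≤ Lγ) (hMφ : 0 ≤ Mφ) (hLφ : 0 ≤ Lφ)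
    (hz : zeta = 4*(Mγ+Lγ)*(Mφ+Lφ)) (hz25 : zeta ≤ 1/25)
    (s s' l l' a a' b b' u u' v v' h h' : ℝ)
    (hss : s < s') (hll : l < l')
    (hh0 : 0 < h) (hh1 : h < 1) (hh0' : 0 ≤ h') (hh1' : h' ≤ 1)
    (ha : a < 0) (hb : 0 < b)
    (haM : |a| ≤ Mγ) (hbM : |b| ≤ Mγ) (ha'M : |a'| ≤ Mγ) (hb'M : |b'| ≤ Mγ)
    (huM : |u| ≤ Mφ) (hu'M : |u'| ≤ Mφ) (hvM : |v| ≤ Mφ) (hv'M : |v'| ≤ Mφ)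
    (haa : |a' - a| ≤ Lγ*(s'-s)) (huu : |u' - u| ≤ Lφ*(s'-s))
    (hbb : |b' - b| ≤ Lγ*(l'-l)) (hvv : |v' - v| ≤ Lφ*(l'-l))
    (hQ : l - s + 2*(b-a)*(v+u) = 0) (hQ' : l' - s' + 2*(b'-a')*(v'+u') = 0)
    (eq1 : (1-h)*a + h*b = (1-h')*a' + h'*b')
    (eq2 : ((1-h)*(s + 2*(a*u)) + h*(l + 2*(b*v)))
         + 2*((1-h)*u + h*v)*((1-h)*a + h*b)
         = ((1-h')*(s' + 2*(a'*u')) + h'*(l' + 2*(b'*v')))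
         + 2*((1-h')*u' + h'*v')*((1-h')*a' + h'*b')) : False := by
  have hδ : (0:ℝ) < s' - s := by linarith
  have hΔ : (0:ℝ) < l' - l := by linarith
  have hw0 : (0:ℝ) < b - a := by linarith
  obtain ⟨haM1, haM2⟩ := abs_le.mp haM
  obtain ⟨hbM1, hbM2⟩ := abs_le.mp hbM
  obtain ⟨ha'M1, ha'M2⟩ := abs_le.mp ha'M
  obtain ⟨hb'M1, hb'M2⟩ := abs_le.mp hb'M
  obtain ⟨huM1, huM2⟩ := abs_le.mp huM
  obtain ⟨hu'M1, hu'M2⟩ := abs_le.mp hu'M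
  obtain ⟨hvM1, hvM2⟩ := abs_le.mp hvM
  obtain ⟨hv'M1, hv'M2⟩ := abs_le.mp hv'M
  -- zeta component bounds
  have hzc : 4*(Lγ*Mφ) + 4*(Mγ*Lφ) ≤ zeta := by
    rw [hz]; linarith [mul_nonneg hMγ hMφ, mul_nonneg hLγ hLφ]
  have hz2 : 4*(Mφ*Lγ) ≤ zeta := by
    rw [hz]; linarith [mul_nonneg hMγ hMφ, mul_nonneg hLγ hLφ, mul_nonneg hMγ hLφ]
  have hz3 : 4*(Mγ*Lφ) ≤ zeta := by
    rw [hz]; linarith [mul_nonneg hMγ hMφ, mul_nonneg hLγ hLφ, mul_nonneg hLγ hMφ]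
  -- the master decomposition identity
  have hdec : s' - s
      = 4*(a*u - a'*u')
      + 2*(((v-u)-(v'-u'))*(h*((a + h*(b-a)) + a)))
      + 2*((v'-u')*((h-h')*((a + h*(b-a)) + a)))
      + 2*((v'-u')*(h'*(a - a'))) := by
    linear_combination h*hQ - eq2 - h'*hQ' + 2*(v'-u')*h'*eq1
  -- y bounds
  have hya : a < a + h*(b-a) := by nlinarith
  have hyb : a + h*(b-a) < b := by nlinarith
  have hyaM : |(a + h*(b-a)) + a| ≤ 2*Mγ := abs_le.mpr ⟨by linarith, by linarith⟩
  have hya2w : |(a + h*(b-a)) + a| ≤ 2*(b-a) := abs_le.mpr ⟨by linarith, by linarith⟩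
  have hk'2 : |v'-u'| ≤ 2*Mφ := abs_le.mpr ⟨by linarith, by linarith⟩
  have habs1 : |h| ≤ 1 := by rw [abs_of_pos hh0]; exact hh1.le
  have habs1' : |h'| ≤ 1 := by rw [abs_of_nonneg hh0']; exact hh1'
  have hkk' : |(v-u)-(v'-u')| ≤ Lφ*(s'-s) + Lφ*(l'-l) := by
    have e : (v-u)-(v'-u') = (u'-u) + -(v'-v) := by ring
    rw [e]
    refine le_trans (abs_add_le _ _) ?_
    rw [abs_neg]; linarith
  have hwdiff : |(b'-a')-(b-a)| ≤ Lγ*(s'-s) + Lγ*(l'-l) := by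
    have e : (b'-a')-(b-a) = (b'-b) + -(a'-a) := by ring
    rw [e]
    refine le_trans (abs_add_le _ _) ?_
    rw [abs_neg]; linarith
  -- control on (h-h') * (b-a)
  have hhw : (h-h')*(b-a) = (a'-a) + h'*((b'-a')-(b-a)) := by linear_combination eq1
  have hhwabs : |h - h'| * (b-a) ≤ Lγ*(2*(s'-s)+(l'-l)) := by
    have h1 : |(h-h')*(b-a)| ≤ |a'-a| + |h'*((b'-a')-(b-a))| := by
      rw [hhw]; exact abs_add_le _ _
    rw [abs_mul, abs_of_pos hw0] at h1
    have h2 : |h'*((b'-a')-(b-a))| ≤ 1*(Lγ*(s'-s) + Lγ*(l'-l)) := by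
      rw [abs_mul]
      exact mul_le_mul habs1' hwdiff (abs_nonneg _) zero_le_one
    linarith
  -- bound on l'-l
  have hΔbound : l' - l ≤ (s'-s) + zeta*((s'-s)+(l'-l)) := by
    have hX : (l'-l) - (s'-s)
        = -2*(((b'-a')-(b-a))*(v'+u') + (b-a)*((v'-v)+(u'-u))) := by
      linear_combination hQ' - hQ
    have hb1 : |((b'-a')-(b-a))*(v'+u')| ≤ (Lγ*(s'-s)+Lγ*(l'-l))*(2*Mφ) := by
      rw [abs_mul]
      exact mul_le_mul hwdiff (abs_le.mpr ⟨by linarith, by linarith⟩) (abs_nonneg _)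
        (add_nonneg (mul_nonneg hLγ (by linarith)) (mul_nonneg hLγ (by linarith)))
    have hb2 : |(b-a)*((v'-v)+(u'-u))| ≤ (2*Mγ)*(Lφ*(l'-l)+Lφ*(s'-s)) := by
      rw [abs_mul]
      refine mul_le_mul (abs_le.mpr ⟨by linarith, by linarith⟩)
        (le_trans (abs_add_le _ _) (by linarith)) (abs_nonneg _) (by linarith)
    have hTz := mul_le_mul_of_nonneg_right hzc (show (0:ℝ) ≤ (s'-s)+(l'-l) by linarith)
    have n1 := neg_abs_le (((b'-a')-(b-a))*(v'+u'))
    have n2 := neg_abs_le ((b-a)*((v'-v)+(u'-u)))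
    linarith [hX, hb1, hb2, n1, n2, hTz]
  -- bound term A
  have t1 : |(a'-a)*u| ≤ (Lγ*(s'-s))*Mφ := by
    rw [abs_mul]; exact mul_le_mul haa huM (abs_nonneg _) (by positivity)
  have t2 : |a'*(u'-u)| ≤ Mγ*(Lφ*(s'-s)) := by
    rw [abs_mul]; exact mul_le_mul ha'M huu (abs_nonneg _) hMγ
  have hA : 4*(a*u - a'*u') ≤ zeta*(s'-s) := by
    have hTz := mul_le_mul_of_nonneg_right hzc hδ.le
    linarith [neg_abs_le ((a'-a)*u), neg_abs_le (a'*(u'-u)), t1, t2, hTz]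
  -- bound term B1
  have t3 : |h*((a + h*(b-a)) + a)| ≤ 1*(2*Mγ) := by
    rw [abs_mul]; exact mul_le_mul habs1 hyaM (abs_nonneg _) zero_le_one
  have t4 : |((v-u)-(v'-u'))*(h*((a + h*(b-a)) + a))|
      ≤ (Lφ*(s'-s)+Lφ*(l'-l))*(1*(2*Mγ)) := by
    rw [abs_mul]
    exact mul_le_mul hkk' t3 (abs_nonneg _) (by positivity)
  have hB1 : 2*(((v-u)-(v'-u'))*(h*((a + h*(b-a)) + a))) ≤ zeta*((s'-s)+(l'-l)) := by
    have hTz := mul_le_mul_of_nonneg_right hz3 (show (0:ℝ) ≤ (s'-s)+(l'-l) by linarith)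
    linarith [le_abs_self (((v-u)-(v'-u'))*(h*((a + h*(b-a)) + a))), t4, hTz]
  -- bound term B2
  have d1 : |(h-h')*((a + h*(b-a)) + a)| ≤ 2*(Lγ*(2*(s'-s)+(l'-l))) := by
    rw [abs_mul]
    calc |h - h'| * |(a + h*(b-a)) + a| ≤ |h - h'| * (2*(b-a)) :=
          mul_le_mul_of_nonneg_left hya2w (abs_nonneg _)
      _ = 2*(|h - h'| * (b-a)) := by ring
      _ ≤ 2*(Lγ*(2*(s'-s)+(l'-l))) := by linarith
  have d2 : |(v'-u')*((h-h')*((a + h*(b-a)) + a))|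
      ≤ (2*Mφ)*(2*(Lγ*(2*(s'-s)+(l'-l)))) := by
    rw [abs_mul]
    exact mul_le_mul hk'2 d1 (abs_nonneg _) (by positivity)
  have hB2 : 2*((v'-u')*((h-h')*((a + h*(b-a)) + a))) ≤ 2*zeta*(2*(s'-s)+(l'-l)) := by
    have hTz := mul_le_mul_of_nonneg_right hz2
      (show (0:ℝ) ≤ 2*(2*(s'-s)+(l'-l)) by linarith)
    linarith [le_abs_self ((v'-u')*((h-h')*((a + h*(b-a)) + a))), d2, hTz]
  -- bound term B3
  have t5 : |h'*(a-a')| ≤ 1*(Lγ*(s'-s)) := by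
    rw [abs_mul]
    refine mul_le_mul habs1' ?_ (abs_nonneg _) zero_le_one
    rw [abs_sub_comm]; exact haa
  have t6 : |(v'-u')*(h'*(a-a'))| ≤ (2*Mφ)*(1*(Lγ*(s'-s))) := by
    rw [abs_mul]
    exact mul_le_mul hk'2 t5 (abs_nonneg _) (by positivity)
  have hB3 : 2*((v'-u')*(h'*(a-a'))) ≤ zeta*(s'-s) := by
    have hTz := mul_le_mul_of_nonneg_right hz2 hδ.le
    linarith [le_abs_self ((v'-u')*(h'*(a-a'))), t6, hTz]
  -- final contradiction
  have p1 : zeta*(s'-s) ≤ (1/25)*(s'-s) := mul_le_mul_of_nonneg_right hz25 hδ.le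
  have p2 : zeta*(l'-l) ≤ (1/25)*(l'-l) := mul_le_mul_of_nonneg_right hz25 hΔ.le
  linarith [hdec, hA, hB1, hB2, hB3, hΔbound, p1, p2, hδ, hΔ]

private lemma lip_abs {K : NNReal} {f : ℝ → ℝ} {S : Set ℝ} (hf : LipschitzOnWith K f S)
    {x y : ℝ} (hx : x ∈ S) (hy : y ∈ S) : |f x - f y| ≤ (K:ℝ) * |x - y| := by
  have := hf.dist_le_mul x hx y hy
  simpa [Real.dist_eq] using this

lemma stmt13_main (tb : ℝ) (htb : 0 < tb)
    (γ₁ γ₂ φ₁ φ₂ : ℝ → ℝ) (Mγ Lγ Mφ Lφ : NNReal)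
    (hγ₁lip : LipschitzOnWith Lγ γ₁ (Set.Icc 0 tb))
    (hγ₂lip : LipschitzOnWith Lγ γ₂ (Set.Icc 0 tb))
    (hγ₁bd : ∀ s ∈ Set.Icc 0 tb, |γ₁ s| ≤ (Mγ : ℝ))
    (hγ₂bd : ∀ s ∈ Set.Icc 0 tb, |γ₂ s| ≤ (Mγ : ℝ))
    (hφ₁lip : LipschitzOnWith Lφ φ₁ (Set.Icc 0 tb))
    (hφ₂lip : LipschitzOnWith Lφ φ₂ (Set.Icc 0 tb))
    (hφ₁bd : ∀ s ∈ Set.Icc 0 tb, |φ₁ s| ≤ (Mφ : ℝ))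
    (hφ₂bd : ∀ s ∈ Set.Icc 0 tb, |φ₂ s| ≤ (Mφ : ℝ))
    (hsign : ∀ t ∈ Set.Ioo 0 tb, γ₁ t < 0 ∧ 0 < γ₂ t)
    (zeta : ℝ) (hzdef : zeta = 4 * ((Mγ : ℝ) + (Lγ : ℝ)) * ((Mφ : ℝ) + (Lφ : ℝ)))
    (hz25 : zeta ≤ 1/25)
    (lam : ℝ → ℝ)
    (hlam_mono : StrictMonoOn lam (Set.Icc 0 tb))
    (hlam_sol : ∀ s ∈ Set.Icc 0 tb, Qphi γ₁ γ₂ φ₁ φ₂ s (lam s) = 0)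
    (hlam0 : lam 0 = 0) (hlamt : lam tb = tb)
    (h s h' s' : ℝ) (hh : h ∈ Set.Ioo (0:ℝ) 1) (hs : s ∈ Set.Ioo 0 tb)
    (hh' : h' ∈ Set.Ioo (0:ℝ) 1) (hs' : s' ∈ Set.Ioo 0 tb) (hss : s < s')
    (eq1 : (1-h)*(γ₁ s) + h*(γ₂ (lam s)) = (1-h')*(γ₁ s') + h'*(γ₂ (lam s')))
    (eq2 : ((1-h)*(s + 2*((γ₁ s)*(φ₁ s))) + h*((lam s) + 2*((γ₂ (lam s))*(φ₂ (lam s)))))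
         + 2*((1-h)*(φ₁ s) + h*(φ₂ (lam s)))*((1-h)*(γ₁ s) + h*(γ₂ (lam s)))
         = ((1-h')*(s' + 2*((γ₁ s')*(φ₁ s'))) + h'*((lam s') + 2*((γ₂ (lam s'))*(φ₂ (lam s')))))
         + 2*((1-h')*(φ₁ s') + h'*(φ₂ (lam s')))*((1-h')*(γ₁ s') + h'*(γ₂ (lam s'))))
    : False := by
  have h0I : (0:ℝ) ∈ Set.Icc (0:ℝ) tb := Set.left_mem_Icc.mpr htb.le
  have htI : tb ∈ Set.Icc (0:ℝ) tb := Set.right_mem_Icc.mpr htb.le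
  have hsI : s ∈ Set.Icc (0:ℝ) tb := ⟨hs.1.le, hs.2.le⟩
  have hs'I : s' ∈ Set.Icc (0:ℝ) tb := ⟨hs'.1.le, hs'.2.le⟩
  have hls : lam s ∈ Set.Ioo (0:ℝ) tb := by
    constructor
    · have := hlam_mono h0I hsI hs.1; rwa [hlam0] at this
    · have := hlam_mono hsI htI hs.2; rwa [hlamt] at this
  have hls' : lam s' ∈ Set.Ioo (0:ℝ) tb := by
    constructor
    · have := hlam_mono h0I hs'I hs'.1; rwa [hlam0] at this
    · have := hlam_mono hs'I htI hs'.2; rwa [hlamt] at this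
  have hlsI : lam s ∈ Set.Icc (0:ℝ) tb := ⟨hls.1.le, hls.2.le⟩
  have hls'I : lam s' ∈ Set.Icc (0:ℝ) tb := ⟨hls'.1.le, hls'.2.le⟩
  have hll : lam s < lam s' := hlam_mono hsI hs'I hss
  have habs_s : |s' - s| = s' - s := abs_of_pos (by linarith)
  have habs_l : |lam s' - lam s| = lam s' - lam s := abs_of_pos (by linarith)
  have haa : |γ₁ s' - γ₁ s| ≤ (Lγ:ℝ)*(s'-s) := by
    have := lip_abs hγ₁lip hs'I hsI; rwa [habs_s] at this
  have huu : |φ₁ s' - φ₁ s| ≤ (Lφ:ℝ)*(s'-s) := by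
    have := lip_abs hφ₁lip hs'I hsI; rwa [habs_s] at this
  have hbb : |γ₂ (lam s') - γ₂ (lam s)| ≤ (Lγ:ℝ)*(lam s' - lam s) := by
    have := lip_abs hγ₂lip hls'I hlsI; rwa [habs_l] at this
  have hvv : |φ₂ (lam s') - φ₂ (lam s)| ≤ (Lφ:ℝ)*(lam s' - lam s) := by
    have := lip_abs hφ₂lip hls'I hlsI; rwa [habs_l] at this
  have hQ := hlam_sol s hsI
  have hQ' := hlam_sol s' hs'I
  simp only [Qphi] at hQ hQ'
  exact stmt13_core (Mγ:ℝ) (Lγ:ℝ) (Mφ:ℝ) (Lφ:ℝ) zeta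
    Mγ.coe_nonneg Lγ.coe_nonneg Mφ.coe_nonneg Lφ.coe_nonneg
    hzdef hz25
    s s' (lam s) (lam s') (γ₁ s) (γ₁ s') (γ₂ (lam s)) (γ₂ (lam s'))
    (φ₁ s) (φ₁ s') (φ₂ (lam s)) (φ₂ (lam s')) h h'
    hss hll hh.1 hh.2 hh'.1.le hh'.2.le
    (hsign s hs).1 (hsign (lam s) hls).2
    (hγ₁bd s hsI) (hγ₂bd (lam s) hlsI) (hγ₁bd s' hs'I) (hγ₂bd (lam s') hls'I)
    (hφ₁bd s hsI) (hφ₁bd s' hs'I) (hφ₂bd (lam s) hlsI) (hφ₂bd (lam s') hls'I)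
    haa huu hbb hvv
    (by linear_combination hQ) (by linear_combination hQ')
    (by linear_combination eq1) (by linear_combination eq2)

/-- the right projection `G = π^r ∘ ρ`,
`G(h,s) = (ρ₂, ρ₃ + 2ρ₁ρ₂)`, is injective on `Q = (0,1) × I`. -/
theorem stmt_13 (tb : ℝ) (htb : 0 < tb)
    (γ₁ γ₂ φ₁ φ₂ : ℝ → ℝ) (Mγ Lγ Mφ Lφ : NNReal)
    (hγ₁lip : LipschitzOnWith Lγ γ₁ (Set.Icc 0 tb))
    (hγ₂lip : LipschitzOnWith Lγ γ₂ (Set.Icc 0 tb))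
    (hγ₁bd : ∀ s ∈ Set.Icc 0 tb, |γ₁ s| ≤ (Mγ : ℝ))
    (hγ₂bd : ∀ s ∈ Set.Icc 0 tb, |γ₂ s| ≤ (Mγ : ℝ))
    (hφ₁lip : LipschitzOnWith Lφ φ₁ (Set.Icc 0 tb))
    (hφ₂lip : LipschitzOnWith Lφ φ₂ (Set.Icc 0 tb))
    (hφ₁bd : ∀ s ∈ Set.Icc 0 tb, |φ₁ s| ≤ (Mφ : ℝ))
    (hφ₂bd : ∀ s ∈ Set.Icc 0 tb, |φ₂ s| ≤ (Mφ : ℝ))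
    (hsign : ∀ t ∈ Set.Ioo 0 tb, γ₁ t < 0 ∧ 0 < γ₂ t)
    (hγ₁0 : γ₁ 0 = 0) (hγ₁t : γ₁ tb = 0) (hγ₂0 : γ₂ 0 = 0) (hγ₂t : γ₂ tb = 0)
    (hφ0 : φ₁ 0 = φ₂ 0) (hφt : φ₁ tb = φ₂ tb)
    (hconv : ConvexOn ℝ (Set.Icc 0 tb) γ₁)
    (hconc : ConcaveOn ℝ (Set.Icc 0 tb) γ₂)
    (zeta : ℝ) (hzdef : zeta = 4 * ((Mγ : ℝ) + (Lγ : ℝ)) * ((Mφ : ℝ) + (Lφ : ℝ)))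
    (hzeta : zeta < (Real.sqrt 721 - 25) / 48)
    (lam : ℝ → ℝ)
    (hlam_bij : Set.BijOn lam (Set.Icc 0 tb) (Set.Icc 0 tb))
    (hlam_mono : StrictMonoOn lam (Set.Icc 0 tb))
    (hlam_sol : ∀ s ∈ Set.Icc 0 tb, Qphi γ₁ γ₂ φ₁ φ₂ s (lam s) = 0)
    (hlam0 : lam 0 = 0) (hlamt : lam tb = tb)
    :
    Set.InjOn
      (fun w : ℝ × ℝ =>
        ((heisRho γ₁ γ₂ φ₁ φ₂ lam w).2.1,
         (heisRho γ₁ γ₂ φ₁ φ₂ lam w).2.2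
           + 2 * (heisRho γ₁ γ₂ φ₁ φ₂ lam w).1 * (heisRho γ₁ γ₂ φ₁ φ₂ lam w).2.1))
      (Set.Ioo (0:ℝ) 1 ×ˢ Set.Ioo (0:ℝ) tb) := by
  have hz25 : zeta ≤ 1/25 := by
    have hs721 : Real.sqrt 721 ≤ 673/25 := by
      nlinarith [Real.sq_sqrt (show (0:ℝ) ≤ 721 by norm_num), Real.sqrt_nonneg 721,
        sq_nonneg (Real.sqrt 721 - 673/25)]
    linarith
  rintro ⟨h, s⟩ hp ⟨h', s'⟩ hq heq
  simp only [Set.mem_prod] at hp hq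
  simp only [heisRho, heisP, Prod.smul_mk, smul_eq_mul, Prod.mk_add_mk, Prod.mk.injEq] at heq
  obtain ⟨e1, e2⟩ := heq
  rcases lt_trichotomy s s' with hlt | heqs | hgt
  · exact (stmt13_main tb htb γ₁ γ₂ φ₁ φ₂ Mγ Lγ Mφ Lφ hγ₁lip hγ₂lip hγ₁bd hγ₂bd
      hφ₁lip hφ₂lip hφ₁bd hφ₂bd hsign zeta hzdef hz25 lam hlam_mono hlam_sol hlam0 hlamt
      h s h' s' hp.1 hp.2 hq.1 hq.2 hlt (by linear_combination e1)
      (by linear_combination e2)).elim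
  · subst heqs
    have hls : lam s ∈ Set.Ioo (0:ℝ) tb := by
      constructor
      · have := hlam_mono (Set.left_mem_Icc.mpr htb.le) ⟨hp.2.1.le, hp.2.2.le⟩ hp.2.1
        rwa [hlam0] at this
      · have := hlam_mono ⟨hp.2.1.le, hp.2.2.le⟩ (Set.right_mem_Icc.mpr htb.le) hp.2.2
        rwa [hlamt] at this
    have hwpos : (0:ℝ) < γ₂ (lam s) - γ₁ s := by
      have h1 := (hsign s hp.2).1
      have h2 := (hsign (lam s) hls).2
      linarith
    have hhh : (h - h') * (γ₂ (lam s) - γ₁ s) = 0 := by linear_combination e1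
    have : h = h' := by
      rcases mul_eq_zero.mp hhh with h1 | h2
      · linarith [sub_eq_zero.mp h1]
      · exact absurd h2 (ne_of_gt hwpos)
    rw [this]
  · exact (stmt13_main tb htb γ₁ γ₂ φ₁ φ₂ Mγ Lγ Mφ Lφ hγ₁lip hγ₂lip hγ₁bd hγ₂bd
      hφ₁lip hφ₂lip hφ₁bd hφ₂bd hsign zeta hzdef hz25 lam hlam_mono hlam_sol hlam0 hlamt
      h' s' h s hq.1 hq.2 hp.1 hp.2 hgt (by linear_combination -e1)
      (by linear_combination -e2)).elim
end
end
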